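/- arXiv:2603.03723 — 5 statements merged into one kernel-verified Lean document; each statement's English description precedes it below -/
import Mathlib

section
/- Let n ≥ 2 and α ∈ [0, π/(2n)]. Define c_j(α) = cos(jπ/n − α) for j = 0,...,n−1. Then the sequence of values |c_{j_k}(α)|, where j_0 = 0, j_k = (k+1)/2 for odd k, and j_k = n − k/2 for even k ≥ 2, is nonincreasing in k; i.e., these indices list the order statistics of {|c_j(α)|} in nonincreasing order. -/
open Real

theorem stmt_1 (n : ℕ) (hn : 2 ≤ n) (α : ℝ) (hα0 : 0 ≤ α) (hα1 : α ≤ π / (2 * n))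
    (c : ℕ → ℝ) (hc : ∀ j, c j = Real.cos ((j : ℝ) * π / n - α))
    (j : ℕ → ℕ) (hj0 : j 0 = 0)
    (hjodd : ∀ k, Odd k → j k = (k + 1) / 2)
    (hjeven : ∀ k, Even k → 2 ≤ k → j k = n - k / 2) :
    (∀ k, k < n → j k < n) ∧ Set.InjOn j (Set.Iio n) ∧
      ∀ k, k + 1 < n → |c (j (k + 1))| ≤ |c (j k)| := by
  have hπ := Real.pi_pos
  have hn0 : (0:ℝ) < n := by exact_mod_cast (by omega : 0 < n)
  have hβpos : (0:ℝ) < π / n := div_pos hπ hn0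
  have hnβ : (n:ℝ) * (π / n) = π := by field_simp
  have h2α : 2 * α ≤ π / n := by
    have h : π / (2 * (n:ℝ)) = (π / n) / 2 := by
      rw [div_div, mul_comm]
    rw [h] at hα1; linarith
  set β := π / n with hβdef
  have hn2 : (2:ℝ) ≤ n := by exact_mod_cast hn
  have hβπ : 2 * β ≤ π := by
    calc 2 * β ≤ (n:ℝ) * β := by nlinarith
    _ = π := hnβ
  -- uniform description of j
  have hjval : ∀ k, (j k = 0 ∧ k = 0) ∨ (k % 2 = 1 ∧ j k = (k+1)/2) ∨
      (k % 2 = 0 ∧ 2 ≤ k ∧ j k = n - k/2) := by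
    intro k
    rcases Nat.even_or_odd k with he | ho
    · have hk2 := Nat.even_iff.mp he
      rcases Nat.eq_zero_or_pos k with rfl | hp
      · exact Or.inl ⟨hj0, rfl⟩
      · exact Or.inr (Or.inr ⟨hk2, by omega, hjeven _ he (by omega)⟩)
    · exact Or.inr (Or.inl ⟨Nat.odd_iff.mp ho, hjodd _ ho⟩)
  set D : ℕ → ℝ := fun k => if k % 2 = 1 then ((k+1)/2 : ℕ) * β - α else ((k/2 : ℕ)) * β + α
    with hD
  have hDodd : ∀ m : ℕ, D (2*m+1) = ((m:ℝ)+1) * β - α := by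
    intro m
    have h1 : (2*m+1) % 2 = 1 := by omega
    have h2 : (2*m+1+1)/2 = m+1 := by omega
    simp only [hD, h1, h2, if_true]
    push_cast; ring
  have hDeven : ∀ m : ℕ, D (2*m) = (m:ℝ) * β + α := by
    intro m
    have h1 : ¬ ((2*m) % 2 = 1) := by omega
    have h2 : (2*m)/2 = m := by omega
    simp only [hD]
    rw [if_neg h1, h2]
  have hmono : ∀ k, D k ≤ D (k+1) := by
    intro k
    rcases Nat.even_or_odd k with ⟨m, rfl⟩ | ⟨m, rfl⟩
    · rw [show m + m = 2*m by ring, show 2*m+1 = 2*m+1 by rfl, hDeven, hDodd]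
      linarith
    · rw [show 2*m+1+1 = 2*(m+1) by ring, hDodd, hDeven]
      push_cast; linarith
  have hkey : ∀ k, k < n → |c (j k)| = Real.cos (D k) ∧ 0 ≤ D k ∧ D k ≤ π/2 := by
    intro k hk
    rcases Nat.even_or_odd k with ⟨m, rfl⟩ | ⟨m, rfl⟩
    · rw [show m + m = 2*m by ring] at hk ⊢
      rcases Nat.eq_zero_or_pos m with rfl | hm
      · rw [hDeven]
        rw [show 2*0 = 0 by ring, hj0, hc]
        have hcosα : Real.cos ((0:ℕ) * π / n - α) = Real.cos α := by
          push_cast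
          rw [show (0:ℝ) * π / n - α = -α by ring, Real.cos_neg]
        have hα2 : α ≤ π/2 := by linarith
        refine ⟨?_, by push_cast; linarith, by push_cast; linarith⟩
        rw [hcosα]
        push_cast
        rw [show (0:ℝ) * β + α = α by ring, abs_of_nonneg]
        exact Real.cos_nonneg_of_mem_Icc ⟨by linarith, hα2⟩
      · have hkev : Even (2*m) := ⟨m, by ring⟩
        rw [hjeven _ hkev (by omega), show (2*m)/2 = m by omega, hDeven, hc]
        have hmn : m ≤ n := by omega
        have hD2 : 2 * ((m:ℝ) * β + α) ≤ π := by
          have h1 : (2*(m:ℝ)+1) ≤ n := by exact_mod_cast (by omega : 2*m+1 ≤ n)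
          nlinarith
        have hDpos : (0:ℝ) ≤ (m:ℝ) * β + α := by positivity
        have hang : ((n - m : ℕ) : ℝ) * π / n - α = π - ((m:ℝ) * β + α) := by
          rw [Nat.cast_sub hmn, hβdef]
          field_simp
          ring
        rw [hang, Real.cos_pi_sub]
        refine ⟨?_, hDpos, by linarith⟩
        rw [abs_neg, abs_of_nonneg]
        exact Real.cos_nonneg_of_mem_Icc ⟨by linarith, by linarith⟩
    · have hkodd : Odd (2*m+1) := ⟨m, rfl⟩
      rw [hjodd _ hkodd, show (2*m+1+1)/2 = m+1 by omega, hDodd, hc]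
      have h1 : (2*((m:ℝ)+1)) ≤ n := by exact_mod_cast (by omega : 2*(m+1) ≤ n)
      have hup : ((m:ℝ)+1) * β ≤ π/2 := by nlinarith
      have hlo : (0:ℝ) ≤ ((m:ℝ)+1) * β - α := by
        have hm0 : (0:ℝ) ≤ (m:ℝ) := Nat.cast_nonneg m
        nlinarith
      have hang : ((m+1 : ℕ) : ℝ) * π / n - α = ((m:ℝ)+1) * β - α := by
        rw [hβdef]; push_cast; ring
      rw [hang]
      refine ⟨?_, hlo, by linarith⟩
      rw [abs_of_nonneg]
      exact Real.cos_nonneg_of_mem_Icc ⟨by linarith, by linarith⟩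
  refine ⟨?_, ?_, ?_⟩
  · intro k hk
    rcases hjval k with ⟨h1, h2⟩ | ⟨h1, h2⟩ | ⟨h1, h2, h3⟩ <;> omega
  · intro k1 hk1 k2 hk2 heq
    simp only [Set.mem_Iio] at hk1 hk2
    rcases hjval k1 with ⟨h1, h2⟩ | ⟨h1, h2⟩ | ⟨h1, h2, h3⟩ <;>
      rcases hjval k2 with ⟨g1, g2⟩ | ⟨g1, g2⟩ | ⟨g1, g2, g3⟩ <;> omega
  · intro k hk
    obtain ⟨e1, l1, u1⟩ := hkey k (by omega)
    obtain ⟨e2, l2, u2⟩ := hkey (k+1) hk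
    rw [e1, e2]
    exact Real.cos_le_cos_of_nonneg_of_le_pi l1 (by linarith) (hmono k)
end

section
/- Let φ = (1+√5)/2 and let g₁ = (0,1,φ), g₂ = (0,1,−φ), g₃ = (1,φ,0), g₄ = (1,−φ,0), g₅ = (φ,0,1), g₆ = (φ,0,−1) in ℝ³. Let T be the convex hull of v₁ = g₁, v₂ = (g₁+g₃)/2, v₃ = (g₁+g₃+g₅)/3. Then for every x ∈ T: |x·g₁| ≥ |x·g₃| ≥ |x·g₅| ≥ |x·g₄| ≥ |x·g₂| ≥ |x·g₆|. -/
noncomputable def goldenRatio' : ℝ := (1 + Real.sqrt 5) / 2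

def dot3 (x y : Fin 3 → ℝ) : ℝ := x 0 * y 0 + x 1 * y 1 + x 2 * y 2

lemma gr_sq : goldenRatio' * goldenRatio' = goldenRatio' + 1 := by
  have h : Real.sqrt 5 * Real.sqrt 5 = 5 := Real.mul_self_sqrt (by norm_num)
  unfold goldenRatio'; nlinarith [h]

lemma gr_one : (1:ℝ) ≤ goldenRatio' := by
  have h2 : (1:ℝ) ≤ Real.sqrt 5 := by
    nlinarith [Real.sq_sqrt (by norm_num : (5:ℝ) ≥ 0), Real.sqrt_nonneg 5]
  unfold goldenRatio'; linarith

set_option maxHeartbeats 1000000 in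
lemma key :
    ∀ x ∈ convexHull ℝ ({![0, 1, goldenRatio'],
        (1 / 2 : ℝ) • (![0, 1, goldenRatio'] + ![1, goldenRatio', 0]),
        (1 / 3 : ℝ) • (![0, 1, goldenRatio'] + ![1, goldenRatio', 0] + ![goldenRatio', 0, 1])} :
        Set (Fin 3 → ℝ)),
      |dot3 x ![0, 1, goldenRatio']| ≥ |dot3 x ![1, goldenRatio', 0]| ∧
      |dot3 x ![1, goldenRatio', 0]| ≥ |dot3 x ![goldenRatio', 0, 1]| ∧
      |dot3 x ![goldenRatio', 0, 1]| ≥ |dot3 x ![1, -goldenRatio', 0]| ∧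
      |dot3 x ![1, -goldenRatio', 0]| ≥ |dot3 x ![0, 1, -goldenRatio']| ∧
      |dot3 x ![0, 1, -goldenRatio']| ≥ |dot3 x ![goldenRatio', 0, -1]| := by
  intro x hx
  set φ := goldenRatio' with hφdef
  have hφ : φ * φ = φ + 1 := gr_sq
  have hφ1 : (1:ℝ) ≤ φ := gr_one
  have hφ0 : (0:ℝ) ≤ φ := by linarith
  clear_value φ
  rw [convexHull_insert ⟨_, Set.mem_insert _ _⟩, mem_convexJoin] at hx
  obtain ⟨a, ha, z, hz, hxz⟩ := hx
  rw [Set.mem_singleton_iff] at ha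
  subst ha
  rw [convexHull_pair] at hz
  obtain ⟨r, t, hr, ht, hrt, rfl⟩ := hz
  obtain ⟨p, q, hp, hq, hpq, rfl⟩ := hxz
  simp only [dot3, Pi.add_apply, Pi.smul_apply, smul_eq_mul,
    Matrix.cons_val_zero, Matrix.cons_val_one, Matrix.head_cons,
    Matrix.cons_val_two, Matrix.tail_cons]
  have hqr : 0 ≤ q * r := mul_nonneg hq hr
  have hqt : 0 ≤ q * t := mul_nonneg hq ht
  have hqrφ : 0 ≤ q * r * φ := mul_nonneg hqr hφ0
  have hqtφ : 0 ≤ q * t * φ := mul_nonneg hqt hφ0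
  have hpφ : 0 ≤ p * φ := mul_nonneg hp hφ0
  have e1 : (p + q*(r*(1+φ)/2 + t*(1+φ)/3)) + (p*φ + q*(r*φ/2 + t*(1+φ)/3))*φ
      = p*(φ+2) + q*r*(φ+1) + q*t*(3*φ+2)/3 := by
    linear_combination (p + q*r/2 + q*t/3) * hφ
  have e3 : (q*(r/2 + t*(1+φ)/3)) + (p + q*(r*(1+φ)/2 + t*(1+φ)/3))*φ
      = p*φ + q*r*(φ+1) + q*t*(3*φ+2)/3 := by
    linear_combination (q*r/2 + q*t/3) * hφ
  have e5 : (q*(r/2 + t*(1+φ)/3))*φ + (p*φ + q*(r*φ/2 + t*(1+φ)/3))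
      = p*φ + q*r*φ + q*t*(3*φ+2)/3 := by
    linear_combination (q*t/3) * hφ
  have e4 : (q*(r/2 + t*(1+φ)/3)) - (p + q*(r*(1+φ)/2 + t*(1+φ)/3))*φ
      = -(p*φ) - q*r*φ - q*t*φ/3 := by
    linear_combination (-(q*r/2) - q*t/3) * hφ
  have e2 : (p + q*(r*(1+φ)/2 + t*(1+φ)/3)) - (p*φ + q*(r*φ/2 + t*(1+φ)/3))*φ
      = -(p*φ) - q*t*φ/3 := by
    linear_combination (-p - q*r/2 - q*t/3) * hφ
  have e6 : (q*(r/2 + t*(1+φ)/3))*φ - (p*φ + q*(r*φ/2 + t*(1+φ)/3))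
      = -(p*φ) + q*t*φ/3 := by
    linear_combination (q*t/3) * hφ
  refine ⟨abs_le_abs (by linarith [e1, e3]) (by linarith [e1, e3]),
    abs_le_abs (by linarith [e3, e5]) (by linarith [e3, e5]),
    abs_le_abs (by linarith [e5, e4]) (by linarith [e5, e4]), ?_, ?_⟩
  · rw [abs_of_nonpos (by linarith [e4])]
    exact abs_le.mpr ⟨by linarith [e4, e2], by linarith [e4, e2]⟩
  · rw [abs_of_nonpos (by linarith [e2])]
    exact abs_le.mpr ⟨by linarith [e2, e6], by linarith [e2, e6]⟩

theorem stmt_7 :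
    let φ := goldenRatio'
    let g₁ : Fin 3 → ℝ := ![0, 1, φ]
    let g₂ : Fin 3 → ℝ := ![0, 1, -φ]
    let g₃ : Fin 3 → ℝ := ![1, φ, 0]
    let g₄ : Fin 3 → ℝ := ![1, -φ, 0]
    let g₅ : Fin 3 → ℝ := ![φ, 0, 1]
    let g₆ : Fin 3 → ℝ := ![φ, 0, -1]
    let v₁ := g₁
    let v₂ := (1 / 2 : ℝ) • (g₁ + g₃)
    let v₃ := (1 / 3 : ℝ) • (g₁ + g₃ + g₅)
    ∀ x ∈ convexHull ℝ {v₁, v₂, v₃},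
      |dot3 x g₁| ≥ |dot3 x g₃| ∧ |dot3 x g₃| ≥ |dot3 x g₅| ∧
        |dot3 x g₅| ≥ |dot3 x g₄| ∧ |dot3 x g₄| ≥ |dot3 x g₂| ∧
          |dot3 x g₂| ≥ |dot3 x g₆| := by
  exact key
end

section
/- Let φ = (1+√5)/2, g₁ = (1,1,1), g₅ = (0,φ,1/φ), g₉ = (φ,1/φ,0), and let x_A = g₁, x_B = (g₁+g₅)/2, x_C the centroid (g₁+g₂+g₅+g₆+g₉)/5 with g₂ = (1,1,−1), g₆ = (0,φ,−1/φ). Parametrize x(u,v) = u·x_A + v·x_B + (1−u−v)·x_C over D = {u,v ≥ 0, u+v ≤ 1}. Then the function f₅(u,v) = (x(u,v)·g₁)/(x(u,v)·g₅) attains its maximum over D at (u,v) = (1,0), with value 3/√5. -/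
theorem stmt_14 :
    let φ := goldenRatio'
    let g₁ : Fin 3 → ℝ := ![1, 1, 1]
    let g₂ : Fin 3 → ℝ := ![1, 1, -1]
    let g₅ : Fin 3 → ℝ := ![0, φ, 1 / φ]
    let g₆ : Fin 3 → ℝ := ![0, φ, -(1 / φ)]
    let g₉ : Fin 3 → ℝ := ![φ, 1 / φ, 0]
    let xA := g₁
    let xB := (1 / 2 : ℝ) • (g₁ + g₅)
    let xC := (1 / 5 : ℝ) • (g₁ + g₂ + g₅ + g₆ + g₉)
    let x : ℝ → ℝ → (Fin 3 → ℝ) := fun u v => u • xA + v • xB + (1 - u - v) • xC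
    (∀ u v : ℝ, 0 ≤ u → 0 ≤ v → u + v ≤ 1 →
        dot3 (x u v) g₁ / dot3 (x u v) g₅ ≤ 3 / Real.sqrt 5) ∧
      dot3 (x 1 0) g₁ / dot3 (x 1 0) g₅ = 3 / Real.sqrt 5 := by
  intro φ g₁ g₂ g₅ g₆ g₉ xA xB xC x
  have hs0 : (0:ℝ) < Real.sqrt 5 := Real.sqrt_pos.mpr (by norm_num)
  have hs : Real.sqrt 5 ^ 2 = 5 := Real.sq_sqrt (by norm_num)
  set s := Real.sqrt 5 with hsdef
  have hs1 : 1 < s := by nlinarith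
  have hφ : φ = (1 + s) / 2 := rfl
  have hφ0 : 0 < φ := by rw [hφ]; linarith
  have hinv : (1:ℝ) / φ = (s - 1) / 2 := by
    rw [hφ]; rw [div_eq_iff (by linarith)]; nlinarith
  constructor
  · intro u v hu hv huv
    have hN : dot3 (x u v) g₁ =
        3 * u + (3 + s) / 2 * v + (5 + 2 * s) / 5 * (1 - u - v) := by
      simp only [dot3, x, xA, xB, xC, g₁, g₂, g₅, g₆, g₉, Pi.add_apply, Pi.smul_apply,
        smul_eq_mul, Matrix.cons_val_zero, Matrix.cons_val_one, Matrix.head_cons,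
        Matrix.cons_val_two, Matrix.tail_cons]
      rw [hinv, hφ]; ring
    have hD : dot3 (x u v) g₅ =
        s * u + (3 + s) / 2 * v + (5 + 2 * s) / 5 * (1 - u - v) := by
      simp only [dot3, x, xA, xB, xC, g₁, g₂, g₅, g₆, g₉, Pi.add_apply, Pi.smul_apply,
        smul_eq_mul, Matrix.cons_val_zero, Matrix.cons_val_one, Matrix.head_cons,
        Matrix.cons_val_two, Matrix.tail_cons]
      rw [hinv, hφ]; nlinarith [sq_nonneg s]
    rw [hN, hD]
    have hDpos : 0 < s * u + (3 + s) / 2 * v + (5 + 2 * s) / 5 * (1 - u - v) := by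
      nlinarith [mul_nonneg hu hs0.le, mul_nonneg hv hs0.le]
    rw [div_le_div_iff₀ hDpos hs0]
    nlinarith [mul_nonneg hv (sub_nonneg.mpr hs1.le), mul_nonneg (sub_nonneg.mpr huv) (sub_nonneg.mpr hs1.le)]
  · have hN : dot3 (x 1 0) g₁ = 3 := by
      simp only [dot3, x, xA, xB, xC, g₁, g₂, g₅, g₆, g₉, Pi.add_apply, Pi.smul_apply,
        smul_eq_mul, Matrix.cons_val_zero, Matrix.cons_val_one, Matrix.head_cons,
        Matrix.cons_val_two, Matrix.tail_cons]
      ring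
    have hD : dot3 (x 1 0) g₅ = s := by
      simp only [dot3, x, xA, xB, xC, g₁, g₂, g₅, g₆, g₉, Pi.add_apply, Pi.smul_apply,
        smul_eq_mul, Matrix.cons_val_zero, Matrix.cons_val_one, Matrix.head_cons,
        Matrix.cons_val_two, Matrix.tail_cons]
      rw [hinv, hφ]; nlinarith [sq_nonneg s]
    rw [hN, hD]
end

section
/- With the same setup as for the dodecahedron (φ = (1+√5)/2, g₁ = (1,1,1), g₉ = (φ,1/φ,0), x(u,v) the barycentric parametrization of the fundamental triangle with vertices x_A = g₁, x_B = (g₁+g₅)/2, x_C = (g₁+g₂+g₅+g₆+g₉)/5), the function f₉(u,v) = (x(u,v)·g₁)/(x(u,v)·g₉) attains its maximum over D = {u,v ≥ 0, u+v ≤ 1} at (u,v) = (0,1), with maximum value φ. -/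
theorem stmt_15 :
    let φ := goldenRatio'
    let g₁ : Fin 3 → ℝ := ![1, 1, 1]
    let g₂ : Fin 3 → ℝ := ![1, 1, -1]
    let g₅ : Fin 3 → ℝ := ![0, φ, 1 / φ]
    let g₆ : Fin 3 → ℝ := ![0, φ, -(1 / φ)]
    let g₉ : Fin 3 → ℝ := ![φ, 1 / φ, 0]
    let xA := g₁
    let xB := (1 / 2 : ℝ) • (g₁ + g₅)
    let xC := (1 / 5 : ℝ) • (g₁ + g₂ + g₅ + g₆ + g₉)
    let x : ℝ → ℝ → (Fin 3 → ℝ) := fun u v => u • xA + v • xB + (1 - u - v) • xC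
    (∀ u v : ℝ, 0 ≤ u → 0 ≤ v → u + v ≤ 1 →
        dot3 (x u v) g₁ / dot3 (x u v) g₉ ≤ φ) ∧
      dot3 (x 0 1) g₁ / dot3 (x 0 1) g₉ = φ := by
  intro φ g₁ g₂ g₅ g₆ g₉ xA xB xC x
  have h5 : Real.sqrt 5 * Real.sqrt 5 = 5 := Real.mul_self_sqrt (by norm_num)
  have h5' : 2 ≤ Real.sqrt 5 := by nlinarith [Real.sqrt_nonneg 5]
  have hφ1 : (3:ℝ)/2 ≤ φ := by simp only [φ, goldenRatio']; linarith
  have hφ2 : φ * φ = φ + 1 := by simp only [φ, goldenRatio']; field_simp; nlinarith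
  have hφ0 : φ ≠ 0 := by positivity -- maybe fails; linarith
  have hinv : 1 / φ = φ - 1 := by
    field_simp
    nlinarith
  simp only [x, xA, xB, xC, g₁, g₂, g₅, g₆, g₉, dot3, Pi.add_apply, Pi.smul_apply,
    smul_eq_mul, Matrix.cons_val_zero, Matrix.cons_val_one, Matrix.head_cons,
    Matrix.cons_val_two, Matrix.tail_cons, hinv]
  constructor
  · intro u v hu hv huv
    have hden : 1 ≤ u * Real.sqrt 5 + v * φ + (1 - u - v) * ((3 + 4*φ)/5) := by
      nlinarith
    rw [div_le_iff₀]
    · have h1φ : (1:ℝ) ≤ φ := by linarith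
      have h1uv : (0:ℝ) ≤ 1 - u - v := by linarith
      have h1 : 0 ≤ (φ - 1) * u := mul_nonneg (by linarith) hu
      have h2 : 0 ≤ (φ - 1) * ((1 - u - v) * (3 + 4 * φ)) :=
        mul_nonneg (by linarith) (mul_nonneg h1uv (by linarith))
      have h3 : (2 * u + v) * (φ * φ) = (2 * u + v) * (φ + 1) := by rw [hφ2]
      nlinarith [h1, h2, h3]
    · nlinarith
  · have hd : φ ≠ 0 := hφ0
    rw [div_eq_iff (by nlinarith)]
    ring_nf
    nlinarith
end

section
/- Let g₁ = (1,1,1), g₈ = (1/φ, 0, −φ), g₁₀ = (φ, −1/φ, 0) with φ = (1+√5)/2, and x(u,v) the barycentric parametrization of the dodecahedral fundamental triangle (vertices x_A = g₁, x_B = (g₁+g₅)/2 with g₅ = (0,φ,1/φ), x_C = (g₁+g₂+g₅+g₆+g₉)/5). Then along the line v = (2√5−4)(1−u), the ratio (x·g₁)/(−x·g₈) equals ((3−√5)u + √5)/((3−√5)u + (√5−2)), which is strictly decreasing in u on [0,1]; its value at u=0 is √5/(√5−2) = 5 + 2√5. -/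
theorem stmt_18 :
    let φ := goldenRatio'
    let g₁ : Fin 3 → ℝ := ![1, 1, 1]
    let g₂ : Fin 3 → ℝ := ![1, 1, -1]
    let g₅ : Fin 3 → ℝ := ![0, φ, 1 / φ]
    let g₆ : Fin 3 → ℝ := ![0, φ, -(1 / φ)]
    let g₈ : Fin 3 → ℝ := ![1 / φ, 0, -φ]
    let g₉ : Fin 3 → ℝ := ![φ, 1 / φ, 0]
    let xA := g₁
    let xB := (1 / 2 : ℝ) • (g₁ + g₅)
    let xC := (1 / 5 : ℝ) • (g₁ + g₂ + g₅ + g₆ + g₉)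
    let x : ℝ → ℝ → (Fin 3 → ℝ) := fun u v => u • xA + v • xB + (1 - u - v) • xC
    let r : ℝ → ℝ := fun u =>
      ((3 - Real.sqrt 5) * u + Real.sqrt 5) /
        ((3 - Real.sqrt 5) * u + (Real.sqrt 5 - 2))
    (∀ u ∈ Set.Icc (0 : ℝ) 1,
        dot3 (x u ((2 * Real.sqrt 5 - 4) * (1 - u))) g₁ /
            (-dot3 (x u ((2 * Real.sqrt 5 - 4) * (1 - u))) g₈) = r u) ∧
      StrictAntiOn r (Set.Icc 0 1) ∧
      r 0 = Real.sqrt 5 / (Real.sqrt 5 - 2) ∧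
      Real.sqrt 5 / (Real.sqrt 5 - 2) = 5 + 2 * Real.sqrt 5 := by
  intro φ g₁ g₂ g₅ g₆ g₈ g₉ xA xB xC x r
  have hs : Real.sqrt 5 ^ 2 = 5 := Real.sq_sqrt (by norm_num)
  have hs2 : (2:ℝ) < Real.sqrt 5 := by
    nlinarith [Real.sqrt_nonneg 5]
  have hs3 : Real.sqrt 5 < 3 := by
    nlinarith [Real.sqrt_nonneg 5]
  have hφ : φ = (1 + Real.sqrt 5) / 2 := rfl
  have hφ0 : φ ≠ 0 := by rw [hφ]; positivity
  have hinv : 1 / ((1 + Real.sqrt 5) / 2) = (Real.sqrt 5 - 1) / 2 := by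
    rw [div_eq_div_iff (by positivity) (by norm_num)]
    nlinarith
  have hφinv : 1 / φ = (Real.sqrt 5 - 1) / 2 := by rw [hφ]; exact hinv
  refine ⟨?_, ?_, ?_, ?_⟩
  · intro u _
    have hN : dot3 (x u ((2 * Real.sqrt 5 - 4) * (1 - u))) g₁
        = (3 - Real.sqrt 5) * u + Real.sqrt 5 := by
      simp only [dot3, x, xA, xB, xC, g₁, g₂, g₅, g₆, g₈, g₉, Pi.add_apply,
        Pi.smul_apply, smul_eq_mul, Matrix.cons_val_zero, Matrix.cons_val_one,
        Matrix.head_cons, Matrix.cons_val_two, Matrix.tail_cons]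
      rw [hφinv, hφ]; nlinarith [sq_nonneg u, sq_nonneg (1-u)]
    have hD : -dot3 (x u ((2 * Real.sqrt 5 - 4) * (1 - u))) g₈
        = (3 - Real.sqrt 5) * u + (Real.sqrt 5 - 2) := by
      simp only [dot3, x, xA, xB, xC, g₁, g₂, g₅, g₆, g₈, g₉, Pi.add_apply,
        Pi.smul_apply, smul_eq_mul, Matrix.cons_val_zero, Matrix.cons_val_one,
        Matrix.head_cons, Matrix.cons_val_two, Matrix.tail_cons]
      rw [hφinv, hφ]
      linear_combination (7 * (1 - u) * (Real.sqrt 5 - 1) / 20) * hs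
    rw [hN, hD]
  · intro a ha b hb hab
    have hDa : 0 < (3 - Real.sqrt 5) * a + (Real.sqrt 5 - 2) := by
      nlinarith [ha.1]
    have hDb : 0 < (3 - Real.sqrt 5) * b + (Real.sqrt 5 - 2) := by
      nlinarith [hb.1]
    show ((3 - Real.sqrt 5) * b + Real.sqrt 5) /
        ((3 - Real.sqrt 5) * b + (Real.sqrt 5 - 2)) <
      ((3 - Real.sqrt 5) * a + Real.sqrt 5) /
        ((3 - Real.sqrt 5) * a + (Real.sqrt 5 - 2))
    rw [div_lt_div_iff₀ hDb hDa]
    nlinarith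
  · show ((3 - Real.sqrt 5) * 0 + Real.sqrt 5) /
        ((3 - Real.sqrt 5) * 0 + (Real.sqrt 5 - 2)) = _
    ring_nf
  · rw [div_eq_iff (by nlinarith : Real.sqrt 5 - 2 ≠ 0)]
    nlinarith
end
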